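/- Let K be a finite field and let f ∈ K[Y] be monic of degree n ≥ 1 with f.coeff 0 ≠ 0. Set S = K[Y]/⟨f⟩ and let ε : S → K be the K-linear map sending the class of a polynomial g to (g %ₘ f).coeff 0. Then for every ideal D of S, the cardinality of D times the cardinality of D^{⊥₀} = {g ∈ S | ε(g · h) = 0 for all h ∈ D} equals the cardinality of S, i.e., |D| · |D^{⊥₀}| = |K|^n. -/

import Mathlib

set_option synthInstance.maxHeartbeats 1000000
set_option maxHeartbeats 1000000


open Polynomial

/-- For an ideal `D` of `S = K[Y]/⟨f⟩` (with `f` monic of degree `n ≥ 1` and nonzero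
constant term), `|D| · |D^{⊥₀}| = |K|^n`, where the `⊥₀`-dual is taken with respect to
the annihilator inner product `⟨g, h⟩₀ = ((g h) %ₘ f).coeff 0`. -/
theorem card_ideal_mul_card_perp0_dual {K : Type*} [Field K] [Fintype K]
    (f : K[X]) (hf : f.Monic) (hn : 1 ≤ f.natDegree) (h0 : f.coeff 0 ≠ 0)
    (ε : (K[X] ⧸ Ideal.span {f}) →ₗ[K] K)
    (hε : ∀ g : K[X], ε (Ideal.Quotient.mk (Ideal.span {f}) g) = (g %ₘ f).coeff 0)
    (D : Ideal (K[X] ⧸ Ideal.span {f})) :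
    Nat.card D *
        Nat.card {g : K[X] ⧸ Ideal.span {f} | ∀ h ∈ D, ε (g * h) = 0} =
      Fintype.card K ^ f.natDegree := by
  classical
  set S := K[X] ⧸ Ideal.span {f} with hS
  set n := f.natDegree with hndef
  have hfne : f ≠ 0 := hf.ne_zero
  have hdegf : f.degree = (n : WithBot ℕ) := degree_eq_natDegree hfne
  -- power basis and finite dimensionality
  let pb : PowerBasis K (AdjoinRoot f) := AdjoinRoot.powerBasis hfne
  haveI : Module.Finite K S := Module.Finite.of_basis (pb.basis)
  haveI : FiniteDimensional K S := inferInstance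
  haveI : Finite S := Module.finite_of_finite K
  have hfinrank : Module.finrank K S = n := by
    rw [show Module.finrank K S = Module.finrank K (AdjoinRoot f) from rfl, pb.finrank]
    rfl
  -- the bilinear form
  let B : LinearMap.BilinForm K S := LinearMap.compr₂ (LinearMap.mul K S) ε
  have hB : ∀ g h : S, B g h = ε (g * h) := fun g h => rfl
  have hsymm : B.IsSymm := LinearMap.BilinForm.isSymm_def.mpr fun g h => by simp [hB, mul_comm]
  have hrefl : B.IsRefl := hsymm.isRefl
  -- nondegeneracy
  have hnd : B.Nondegenerate := by
    refine (LinearMap.IsRefl.nondegenerate_iff_separatingLeft hrefl).mpr ?_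
    intro g hg
    obtain ⟨p, rfl⟩ := Ideal.Quotient.mk_surjective g
    have hmk : Ideal.Quotient.mk (Ideal.span {f}) p
        = Ideal.Quotient.mk (Ideal.span {f}) (p %ₘ f) := by
      rw [Ideal.Quotient.eq, Ideal.mem_span_singleton]
      exact ⟨p /ₘ f, by nth_rewrite 1 [← modByMonic_add_div p f]; ring⟩
    set r : K[X] := p %ₘ f with hr
    by_cases hr0 : r = 0
    · rw [hmk, hr0, map_zero]
    exfalso
    have hdr : r.degree < f.degree := degree_modByMonic_lt p hf
    have hdn : r.natDegree < n := by
      have := natDegree_lt_natDegree hr0 hdr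
      simpa using this
    set d := r.natDegree with hd
    set k := n - d with hk
    have hk1 : 1 ≤ k := by omega
    have hdk : d + k = n := by omega
    -- the test element
    have key := hg (Ideal.Quotient.mk (Ideal.span {f}) (X ^ k))
    rw [hB, hmk, ← map_mul, hε] at key
    -- compute the remainder explicitly
    set s : K[X] := r * X ^ k - C r.leadingCoeff * f with hs
    have hdkn : r.natDegree + k = n := by omega
    have hdeg1 : (r * X ^ k).degree = (n : WithBot ℕ) := by
      rw [degree_mul, degree_X_pow, degree_eq_natDegree hr0, ← Nat.cast_add, hdkn]
    have hlc1 : (r * X ^ k).leadingCoeff = r.leadingCoeff := by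
      simp [leadingCoeff_mul, (monic_X_pow k).leadingCoeff]
    have hdeg2 : (C r.leadingCoeff * f).degree = (n : WithBot ℕ) := by
      rw [degree_C_mul (leadingCoeff_ne_zero.mpr hr0), hdegf]
    have hlc2 : (C r.leadingCoeff * f).leadingCoeff = r.leadingCoeff := by
      simp [leadingCoeff_mul, hf.leadingCoeff]
    have hne1 : r * X ^ k ≠ 0 := by
      intro h; rw [h] at hdeg1; simp at hdeg1
    have hsdeg : s.degree < f.degree := by
      rw [hdegf, ← hdeg1]
      show s.degree < (r * X ^ k).degree
      exact degree_sub_lt (by rw [hdeg1, hdeg2]) hne1 (by rw [hlc1, hlc2])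
    have hmod : (r * X ^ k) %ₘ f = s := by
      have h1 : (r * X ^ k) %ₘ f = s %ₘ f := by
        apply modByMonic_eq_of_dvd_sub hf
        exact ⟨C r.leadingCoeff, by rw [hs]; ring⟩
      rw [h1, (modByMonic_eq_self_iff hf).mpr hsdeg]
    rw [hmod] at key
    have hc0 : s.coeff 0 = -(r.leadingCoeff * f.coeff 0) := by
      rw [hs, coeff_sub, coeff_mul_X_pow', coeff_C_mul]
      simp [Nat.not_le_of_lt hk1]
    rw [hc0, neg_eq_zero] at key
    exact (mul_ne_zero (leadingCoeff_ne_zero.mpr hr0) h0) key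
  -- relate the two sets to submodules
  let W : Submodule K S := D.restrictScalars K
  have hset : {g : S | ∀ h ∈ D, ε (g * h) = 0} = ↑(B.orthogonal W) := by
    ext g
    constructor
    · intro hg h hhW
      rw [hB, mul_comm]
      exact hg h ((Submodule.restrictScalars_mem K D h).mp hhW)
    · intro hg h hhD
      have := hg h ((Submodule.restrictScalars_mem K D h).mpr hhD)
      rw [hB, mul_comm] at this
      exact this
  -- cardinalities
  have cardsub : ∀ N : Submodule K S,
      Nat.card N = Fintype.card K ^ Module.finrank K N := fun N => by
    haveI := Fintype.ofFinite N
    rw [Nat.card_eq_fintype_card]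
    exact Module.card_eq_pow_finrank
  have h1 : Nat.card D = Fintype.card K ^ Module.finrank K W := by
    have : Nat.card D = Nat.card W := rfl
    rw [this]; exact cardsub W
  have h2 : Nat.card {g : S | ∀ h ∈ D, ε (g * h) = 0}
      = Fintype.card K ^ Module.finrank K (B.orthogonal W) := by
    rw [hset]
    exact cardsub _
  have hdim : Module.finrank K (B.orthogonal W) = n - Module.finrank K W := by
    rw [LinearMap.BilinForm.finrank_orthogonal hnd W, hfinrank]
  have hle : Module.finrank K W ≤ n := hfinrank ▸ Submodule.finrank_le W
  rw [h1, h2, hdim, ← pow_add]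
  congr 1
  omega
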